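/- If F(x,y) = (a x² + 2b x y + c y²)/2 + (d x + e y)/2 + f is a quadratic packing polynomial on ℕ², then b ≤ 1. -/

import Mathlib

open Finset Filter

lemma lin_case (b' d' : ℤ) (c' : ℕ) (e' : ℤ) (f : ℕ) (hb : 2 ≤ b')
    (G : ℕ → ℕ → ℤ)
    (hG : ∀ x y : ℕ, G x y = (2*b'*y + d')*x + ((c':ℤ)*y^2 + e'*y + 2*f))
    (hval : ∀ x y : ℕ, ∃ n : ℕ, G x y = 2*n)
    (hinj : ∀ x y x' y' : ℕ, G x y = G x' y' → x = x' ∧ y = y') : False := by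
  -- d' ≥ 0
  have hd : 0 ≤ d' := by
    by_contra hd
    push_neg at hd
    obtain ⟨n, hn⟩ := hval (2*f+1) 0
    rw [hG] at hn
    push_cast at hn
    have hn0 : (0:ℤ) ≤ n := Int.ofNat_nonneg n
    nlinarith [mul_nonneg (by linarith : (0:ℤ) ≤ -(d'+1)) (by positivity : (0:ℤ) ≤ 2*(f:ℤ)+1)]
  set q : ℤ := 2*b' + d' with hq
  have hq4 : (4:ℤ) ≤ q := by linarith
  -- choose Y with large harmonic sum
  obtain ⟨Y, hY⟩ := (Real.tendsto_sum_range_one_div_nat_succ_atTop.eventually_ge_atTop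
      ((2*q : ℤ) : ℝ)).exists
  set s : ℕ → ℤ := fun i => 2*b'*(i+1) + d' with hs
  have hspos : ∀ i : ℕ, (0:ℤ) < s i := by
    intro i
    have : (0:ℤ) ≤ (i:ℤ) := Int.ofNat_nonneg i
    simp only [hs]
    nlinarith
  have hSinv : (2:ℝ) ≤ ∑ i ∈ range Y, 1 / ((s i : ℤ) : ℝ) := by
    have hterm : ∀ i ∈ range Y, (1 / ((i:ℝ)+1)) ≤ (q:ℝ) * (1 / ((s i : ℤ):ℝ)) := by
      intro i _
      have h1 : (0:ℝ) < (i:ℝ)+1 := by positivity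
      have h2 : (0:ℝ) < ((s i : ℤ):ℝ) := by exact_mod_cast hspos i
      rw [div_le_iff₀ h1]
      have : ((s i : ℤ):ℝ) ≤ (q:ℝ) * ((i:ℝ)+1) := by
        have hqR : ((q:ℤ):ℝ) = 2*(b':ℝ) + (d':ℝ) := by rw [hq]; push_cast; ring
        simp only [hs]
        rw [hqR]
        push_cast
        have hi0 : (0:ℝ) ≤ (i:ℝ) := Nat.cast_nonneg i
        have hd' : (0:ℝ) ≤ (d':ℝ) := by exact_mod_cast hd
        nlinarith [mul_nonneg hd' hi0]
      calc (1:ℝ) = ((s i:ℤ):ℝ) * (1/((s i:ℤ):ℝ)) := by field_simp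
        _ ≤ ((q:ℝ) * ((i:ℝ)+1)) * (1/((s i:ℤ):ℝ)) := by
            apply mul_le_mul_of_nonneg_right this
            positivity
        _ = (q:ℝ) * (1/((s i:ℤ):ℝ)) * ((i:ℝ)+1) := by ring
    have := Finset.sum_le_sum hterm
    rw [← Finset.mul_sum] at this
    have hq0 : (0:ℝ) < (q:ℝ) := by exact_mod_cast (by linarith : (0:ℤ) < q)
    have h2q : 2*(q:ℝ) ≤ (q:ℝ) * ∑ i ∈ range Y, 1 / ((s i : ℤ):ℝ) := by
      refine le_trans ?_ this
      exact_mod_cast hY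
    nlinarith
  -- constants
  set r : ℕ → ℤ := fun i => (c':ℤ)*((i:ℤ)+1)^2 + e'*((i:ℤ)+1) + 2*f with hr
  set R : ℤ := ∑ i ∈ range Y, |r i| with hR
  have hR0 : 0 ≤ R := Finset.sum_nonneg (fun i _ => abs_nonneg _)
  set N : ℕ := R.toNat + 1000 with hN
  have hRN : R ≤ (N:ℤ) := by
    simp only [hN]
    push_cast
    have := Int.toNat_of_nonneg hR0
    omega
  have hrN : ∀ i ∈ range Y, r i ≤ (N:ℤ) := by
    intro i hi
    have h1 : r i ≤ |r i| := le_abs_self _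
    have h2 : |r i| ≤ R := Finset.single_le_sum (fun j _ => abs_nonneg (r j)) hi
    linarith
  set X : ℕ → ℕ := fun i => ((2*(N:ℤ) - r i) / (s i)).toNat with hX
  have hXval : ∀ i ∈ range Y, ((X i : ℤ) = (2*(N:ℤ) - r i) / (s i)) := by
    intro i hi
    apply Int.toNat_of_nonneg
    apply Int.ediv_nonneg _ (le_of_lt (hspos i))
    have := hrN i hi
    linarith
  have hGval : ∀ i x : ℕ, G x (i+1) = s i * x + r i := by
    intro i x
    rw [hG]
    simp only [hs, hr]
    push_cast
    ring
  -- choice function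
  have hν : ∀ x y : ℕ, G x y = 2 * ((hval x y).choose : ℤ) := fun x y => (hval x y).choose_spec
  -- the Finset of points
  set P : Finset ((_ : ℕ) × ℕ) := (range Y).sigma (fun i => range (X i + 1)) with hP
  have hcardP : P.card = ∑ i ∈ range Y, (X i + 1) := by
    simp [hP, Finset.card_sigma]
  have hupper : P.card ≤ N + 1 := by
    have hcr : (Finset.range (N+1)).card = N + 1 := Finset.card_range _
    rw [← hcr]
    apply Finset.card_le_card_of_injOn (fun p : (_ : ℕ) × ℕ => (hval p.2 (p.1+1)).choose)
    · -- maps to range (N+1)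
      intro p hp
      simp only [hP, Finset.mem_coe, Finset.mem_sigma, Finset.mem_range] at hp
      obtain ⟨hi, hx⟩ := hp
      simp only [Finset.mem_coe, Finset.mem_range]
      have hGle : G p.2 (p.1+1) ≤ 2*(N:ℤ) := by
        rw [hGval]
        have h1 : s p.1 * (X p.1) ≤ 2*(N:ℤ) - r p.1 := by
          rw [hXval p.1 (Finset.mem_range.mpr hi)]
          have hmod := Int.emod_nonneg (2*(N:ℤ) - r p.1) (ne_of_gt (hspos p.1))
          have hdef := Int.emod_def (2*(N:ℤ) - r p.1) (s p.1)
          linarith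
        have h2 : s p.1 * (p.2:ℤ) ≤ s p.1 * (X p.1) := by
          apply mul_le_mul_of_nonneg_left _ (le_of_lt (hspos p.1))
          exact_mod_cast Nat.lt_succ_iff.mp hx
        linarith
      have := hν p.2 (p.1+1)
      omega
    · -- injective
      intro p hp p' hp' hpp
      have h1 := hν p.2 (p.1+1)
      have h2 := hν p'.2 (p'.1+1)
      have : G p.2 (p.1+1) = G p'.2 (p'.1+1) := by
        rw [h1, h2]
        exact_mod_cast congrArg (fun n : ℕ => 2*(n:ℤ)) hpp
      obtain ⟨hx, hy⟩ := hinj _ _ _ _ this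
      exact Sigma.ext (by omega) (by simpa using hx)
  -- lower bound
  have hlow : ((N:ℝ) + 2) ≤ ∑ i ∈ range Y, ((X i : ℝ) + 1) := by
    have hterm : ∀ i ∈ range Y,
        2*(N:ℝ) * (1/((s i:ℤ):ℝ)) - ((|r i| : ℤ):ℝ) ≤ (X i : ℝ) + 1 := by
      intro i hi
      have hsR : (0:ℝ) < ((s i:ℤ):ℝ) := by exact_mod_cast hspos i
      have h1 : 2*(N:ℤ) - r i ≤ s i * ((X i : ℤ) + 1) := by
        rw [hXval i hi]
        have hmod := Int.emod_lt_of_pos (2*(N:ℤ) - r i) (hspos i)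
        have hdef := Int.emod_def (2*(N:ℤ) - r i) (s i)
        linarith
      have h1R : 2*(N:ℝ) - ((r i:ℤ):ℝ) ≤ ((s i:ℤ):ℝ) * ((X i:ℝ) + 1) := by
        exact_mod_cast h1
      have hs1 : (1:ℝ) ≤ ((s i:ℤ):ℝ) := by
        have := hspos i; exact_mod_cast this
      have habs : -((|r i|:ℤ):ℝ) ≤ ((r i:ℤ):ℝ) := by
        exact_mod_cast neg_abs_le (r i)
      have habs0 : (0:ℝ) ≤ ((|r i|:ℤ):ℝ) := by exact_mod_cast abs_nonneg (r i)
      have key : 2*(N:ℝ) * (1/((s i:ℤ):ℝ)) ≤ ((X i:ℝ)+1) + ((r i:ℤ):ℝ) * (1/((s i:ℤ):ℝ)) := by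
        rw [← sub_le_iff_le_add]
        calc 2*(N:ℝ) * (1/((s i:ℤ):ℝ)) - ((r i:ℤ):ℝ) * (1/((s i:ℤ):ℝ))
            = (2*(N:ℝ) - ((r i:ℤ):ℝ)) * (1/((s i:ℤ):ℝ)) := by ring
          _ ≤ (((s i:ℤ):ℝ) * ((X i:ℝ) + 1)) * (1/((s i:ℤ):ℝ)) := by
              apply mul_le_mul_of_nonneg_right h1R
              positivity
          _ = (X i:ℝ) + 1 := by field_simp
      have hrs : ((r i:ℤ):ℝ) * (1/((s i:ℤ):ℝ)) ≤ ((|r i|:ℤ):ℝ) := by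
        have hinv1 : 1/((s i:ℤ):ℝ) ≤ 1 := by
          rw [div_le_one hsR]; exact hs1
        have hinv0 : (0:ℝ) ≤ 1/((s i:ℤ):ℝ) := by positivity
        have hrabs : ((r i:ℤ):ℝ) ≤ ((|r i|:ℤ):ℝ) := by exact_mod_cast le_abs_self (r i)
        exact le_trans (mul_le_mul_of_nonneg_right hrabs hinv0) ((mul_le_mul_of_nonneg_left hinv1 habs0).trans (le_of_eq (mul_one _)))
      linarith
    have := Finset.sum_le_sum hterm
    rw [Finset.sum_sub_distrib, ← Finset.mul_sum] at this
    have hRsum : ∑ i ∈ range Y, ((|r i| : ℤ):ℝ) = (R:ℝ) := by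
      rw [hR]; push_cast; ring
    rw [hRsum] at this
    have hN2 : (0:ℝ) ≤ 2*(N:ℝ) := by positivity
    have h4N : 2*(N:ℝ)*2 ≤ 2*(N:ℝ) * ∑ i ∈ range Y, 1/((s i:ℤ):ℝ) :=
      mul_le_mul_of_nonneg_left hSinv hN2
    have hRN' : (R:ℝ) ≤ (N:ℝ) := by exact_mod_cast hRN
    have hN1000 : (1000:ℝ) ≤ (N:ℝ) := by
      have : 1000 ≤ N := by omega
      exact_mod_cast this
    linarith
  -- contradiction
  have hub : (∑ i ∈ range Y, ((X i:ℝ) + 1)) ≤ (N:ℝ) + 1 := by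
    have : ∑ i ∈ range Y, ((X i:ℝ) + 1) = ((∑ i ∈ range Y, (X i + 1) : ℕ) : ℝ) := by
      push_cast; ring
    rw [this]
    rw [hcardP] at hupper
    exact_mod_cast hupper
  linarith

lemma sum_block (w : ℕ → ℕ) (B : ℕ) (k : ℕ) :
    ∑ y ∈ range (k*B), w y = ∑ j ∈ range k, ∑ δ ∈ range B, w (j*B+δ) := by
  induction k with
  | zero => simp
  | succ k ih =>
    rw [Finset.sum_range_succ, ← ih, Nat.succ_mul, Finset.range_eq_Ico,
      ← Finset.sum_Ico_consecutive w (Nat.zero_le (k*B)) (Nat.le_add_right (k*B) B)]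
    congr 1
    · rw [Finset.range_eq_Ico]
    rw [Finset.sum_Ico_eq_sum_range]
    simp

lemma sqrt_step (A z δ : ℕ) : Nat.sqrt (A + 3*(z+δ)^2) ≤ Nat.sqrt (A + 3*z^2) + 2*δ := by
  set s := Nat.sqrt (A + 3*z^2) with hs
  have h1 : A + 3*z^2 < (s+1)^2 := Nat.lt_succ_sqrt' _
  have h2 : (3*z)/2 ≤ s := by
    rw [hs, Nat.le_sqrt]
    have h3 : 2*((3*z)/2) ≤ 3*z := by omega
    nlinarith [Nat.mul_le_mul h3 h3]
  have h4 : 6*z ≤ 4*s + 4 := by omega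
  have h5 : A + 3*(z+δ)^2 < (s + 2*δ + 1)^2 := by
    nlinarith [Nat.mul_le_mul_right δ h4]
  have := Nat.sqrt_lt'.mpr h5
  omega

lemma s0_bound (M D : ℕ) (hMD : M < 300000000*(D+1)^2) : Nat.sqrt M ≤ 17400*(D+1) := by
  have h1 : Nat.sqrt M < 17400*(D+1)+1 := by
    rw [Nat.sqrt_lt']
    nlinarith [sq_nonneg (D+1), Nat.zero_le (D+1)]
  omega

lemma quad_bound (a c f N D : ℕ) (b d e : ℤ) (x y n : ℕ)
    (ha' : (1:ℤ) ≤ a) (hc' : (1:ℤ) ≤ c) (hb : 2 ≤ b)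
    (hdD : -(D:ℤ) ≤ d) (heD : -(D:ℤ) ≤ e)
    (hgz : (a:ℤ)*x^2 + 2*b*x*y + (c:ℤ)*y^2 + d*x + e*y + 2*f = 2*n)
    (hnN : (n:ℤ) ≤ N) (hxy : 10*(D:ℤ) + 1 ≤ (x:ℤ) + (y:ℤ)) :
    9*((x:ℤ)^2 + 4*x*y + (y:ℤ)^2) ≤ 20*(N:ℤ) := by
  have hx0 : (0:ℤ) ≤ (x:ℤ) := Int.ofNat_nonneg x
  have hy0 : (0:ℤ) ≤ (y:ℤ) := Int.ofNat_nonneg y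
  have hf0 : (0:ℤ) ≤ (f:ℤ) := Int.ofNat_nonneg f
  have hD0 : (0:ℤ) ≤ (D:ℤ) := Int.ofNat_nonneg D
  have hQ1 : (x:ℤ)^2 + 4*x*y + (y:ℤ)^2 ≤ 2*(N:ℤ) + (D:ℤ)*((x:ℤ)+(y:ℤ)) := by
    nlinarith [mul_nonneg (sub_nonneg.mpr ha') (sq_nonneg (x:ℤ)),
      mul_nonneg (sub_nonneg.mpr hc') (sq_nonneg (y:ℤ)),
      mul_nonneg (mul_nonneg (by linarith : (0:ℤ) ≤ b - 2) hx0) hy0,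
      mul_nonneg (by linarith : (0:ℤ) ≤ d + D) hx0,
      mul_nonneg (by linarith : (0:ℤ) ≤ e + D) hy0]
  have hQ2 : 10*(D:ℤ)*((x:ℤ)+(y:ℤ)) ≤ ((x:ℤ)+(y:ℤ))^2 := by
    nlinarith [mul_nonneg (mul_nonneg (by norm_num : (0:ℤ) ≤ 10) hD0)
      (by linarith : (0:ℤ) ≤ (x:ℤ)+(y:ℤ))]
  nlinarith [mul_nonneg hx0 hy0]

lemma sq_le_Q (x y Q M : ℕ) (h1 : Q = x^2 + 4*x*y + y^2) (h2 : Q ≤ M) : x*x ≤ M ∧ y*y ≤ M := by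
  constructor <;> nlinarith

lemma row_bound (M x y : ℕ) (h3 : x^2+4*x*y+y^2 ≤ M) : x + 2*y ≤ Nat.sqrt (M+3*y^2) := by
  rw [Nat.le_sqrt]
  nlinarith

lemma block_sqrt_bound (M s0 B V mj j : ℕ) (hs0 : s0 = Nat.sqrt M) (hB8 : 8*B ≤ s0+8)
    (hv1 : (s0+8)*mj < 800*(V+1)) (hmj : 10000*(64+3*j^2) ≤ mj^2) :
    Nat.sqrt (M + 3*(j*B)^2) ≤ V + 1 := by
  have hstep1 : 64*M + 64 ≤ 64*((s0+8)^2) := by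
    have h1 : M < (s0+1)^2 := hs0 ▸ Nat.lt_succ_sqrt' M
    have h2 : (s0+1)^2 ≤ (s0+8)^2 := Nat.pow_le_pow_left (by omega) 2
    have h3 : M < (s0+8)^2 := lt_of_lt_of_le h1 h2
    omega
  have hstep2 : 64*(3*(j*B)^2) ≤ 3*j^2*((s0+8)^2) := by
    have h1 : (8*B)^2 ≤ (s0+8)^2 := Nat.pow_le_pow_left hB8 2
    calc 64*(3*(j*B)^2) = 3*j^2*((8*B)^2) := by ring
      _ ≤ 3*j^2*((s0+8)^2) := Nat.mul_le_mul_left _ h1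
  have hstep3 : 64*(M + 3*(j*B)^2) + 64 ≤ (64+3*j^2)*((s0+8)^2) := by
    have h3 : (64+3*j^2)*((s0+8)^2) = 64*((s0+8)^2) + 3*j^2*((s0+8)^2) := by ring
    linarith
  have hstep4 : 10000*((64+3*j^2)*((s0+8)^2)) ≤ mj^2 * ((s0+8)^2) := by
    have := Nat.mul_le_mul_right ((s0+8)^2) hmj
    linarith
  have hstep5 : mj^2*((s0+8)^2) ≤ (800*(V + 1))^2 := by
    calc mj^2*((s0+8)^2) = ((s0+8)*mj)^2 := by ring
      _ ≤ (800*(V+1))^2 := Nat.pow_le_pow_left (le_of_lt hv1) 2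
  have hVsq : (800*(V+1))^2 ≤ 640000*((V + 2)^2) := by
    have h5 : (V + 1)^2 ≤ (V+2)^2 := Nat.pow_le_pow_left (by omega) 2
    calc (800*(V+1))^2 = 640000*((V+1)^2) := by ring
      _ ≤ 640000*((V + 2)^2) := Nat.mul_le_mul_left _ h5
  have hfin : M + 3*(j*B)^2 < (V + 2)^2 := by
    have h640 : 640000*(M + 3*(j*B)^2) + 640000 ≤ 640000*((V + 2)^2) := by
      calc 640000*(M + 3*(j*B)^2) + 640000 = 10000*(64*(M + 3*(j*B)^2) + 64) := by ring
        _ ≤ 10000*((64+3*j^2)*((s0+8)^2)) := Nat.mul_le_mul_left _ hstep3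
        _ ≤ mj^2 * ((s0+8)^2) := hstep4
        _ ≤ (800*(V + 1))^2 := hstep5
        _ ≤ 640000*((V + 2)^2) := hVsq
    linarith
  have := Nat.sqrt_lt'.mpr hfin
  omega

lemma main_case (a c f : ℕ) (b d e : ℤ) (ha : 1 ≤ a) (hc : 1 ≤ c) (hb : 2 ≤ b)
    (g : ℕ → ℕ → ℤ)
    (hg : ∀ x y : ℕ, g x y = (a:ℤ)*x^2 + 2*b*x*y + (c:ℤ)*y^2 + d*x + e*y + 2*f)
    (hval : ∀ x y : ℕ, ∃ n : ℕ, g x y = 2*n)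
    (hinj : ∀ x y x' y' : ℕ, g x y = g x' y' → x = x' ∧ y = y')
    (hsurj : ∀ n : ℕ, ∃ x y : ℕ, g x y = 2*n) : False := by
  clear hval hinj
  obtain ⟨D, hD⟩ : ∃ D : ℕ, D = d.natAbs + e.natAbs + 1 := ⟨_, rfl⟩
  obtain ⟨N, hN⟩ : ∃ N : ℕ, N = 100000000 * (D+1)^2 := ⟨_, rfl⟩
  obtain ⟨M, hM⟩ : ∃ M : ℕ, M = (20*N)/9 + 1 := ⟨_, rfl⟩
  obtain ⟨s0, hs0⟩ : ∃ s0 : ℕ, s0 = Nat.sqrt M := ⟨_, rfl⟩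
  obtain ⟨B, hB⟩ : ∃ B : ℕ, B = s0/8 + 1 := ⟨_, rfl⟩
  have hB8 : 8*B ≤ s0 + 8 := by omega
  have hB8' : s0 + 1 ≤ 8*B := by omega
  have h9M : 9*M ≤ 20*N + 9 ∧ 20*N ≤ 9*M := by constructor <;> omega
  obtain ⟨m, hm⟩ : ∃ m : ℕ → ℕ, m = fun j => if j = 0 then 800 else if j = 1 then 819
    else if j = 2 then 872 else if j = 3 then 954 else if j = 4 then 1059
    else if j = 5 then 1179 else if j = 6 then 1312 else 1453 := ⟨_, rfl⟩
  obtain ⟨V, hV⟩ : ∃ V : ℕ → ℕ, V = fun j => ((s0+8)*(m j))/800 := ⟨_, rfl⟩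
  obtain ⟨t, ht⟩ : ∃ t : ℕ → ℕ, t = fun y => Nat.sqrt (M + 3*y^2) := ⟨_, rfl⟩
  obtain ⟨w, hw⟩ : ∃ w : ℕ → ℕ, w = fun y => t y + 1 - 2*y := ⟨_, rfl⟩
  obtain ⟨u, hu⟩ : ∃ u : ℕ → ℕ, u = fun j => V j + 2 - 2*(j*B) := ⟨_, rfl⟩
  have hE : 1 ≤ (D+1)^2 := Nat.one_le_pow _ _ (Nat.succ_pos D)
  have hMD : M < 300000000*(D+1)^2 := by linarith only [h9M.1, hE, hN.le, hN.ge]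
  have hs0D : s0 ≤ 17400*(D+1) := hs0 ▸ s0_bound M D hMD
  have hdD : -(D:ℤ) ≤ d := by
    have h1 : (d.natAbs:ℤ) ≤ (D:ℤ) := by exact_mod_cast (by omega : d.natAbs ≤ D)
    have h2 := neg_abs_le d
    rw [Int.abs_eq_natAbs] at h2
    linarith only [h1, h2]
  have heD : -(D:ℤ) ≤ e := by
    have h1 : (e.natAbs:ℤ) ≤ (D:ℤ) := by exact_mod_cast (by omega : e.natAbs ≤ D)
    have h2 := neg_abs_le e
    rw [Int.abs_eq_natAbs] at h2
    linarith only [h1, h2]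
  -- key pointwise bound
  have hkey : ∀ x y n : ℕ, g x y = 2*n → n ≤ N →
      (x ≤ 10*D ∧ y ≤ 10*D) ∨ (x ≤ s0 ∧ y ≤ s0 ∧ x^2 + 4*x*y + y^2 ≤ M) := by
    intro x y n hgxy hnN
    rcases le_or_gt (x+y) (10*D) with hxy | hxy
    · left; omega
    · right
      have hgz : (a:ℤ)*x^2 + 2*b*x*y + (c:ℤ)*y^2 + d*x + e*y + 2*f = 2*n := by
        rw [← hg]; exact hgxy
      have hQ3 := quad_bound a c f N D b d e x y n (by exact_mod_cast ha)
        (by exact_mod_cast hc) hb hdD heD hgz (by exact_mod_cast hnN)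
        (by exact_mod_cast hxy)
      have hQn : 9*(x^2 + 4*x*y + y^2) ≤ 20*N := by exact_mod_cast hQ3
      obtain ⟨Q, hQdef⟩ : ∃ q : ℕ, q = x^2 + 4*x*y + y^2 := ⟨_, rfl⟩
      have hQn' : 9*Q ≤ 20*N := by rw [hQdef]; exact hQn
      have hQM : Q ≤ M := by omega
      obtain ⟨hxx, hyy⟩ := sq_le_Q x y Q M hQdef hQM
      exact ⟨hs0 ▸ Nat.le_sqrt.mpr hxx, hs0 ▸ Nat.le_sqrt.mpr hyy, by omega⟩
  obtain ⟨box, hbox⟩ : ∃ box : Finset (ℕ×ℕ), box = (range (10*D+1)) ×ˢ (range (10*D+1)) :=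
    ⟨_, rfl⟩
  obtain ⟨T, hT⟩ : ∃ T : Finset (ℕ×ℕ), T = (range (s0+1)).biUnion
    (fun y => (range (w y)).image (fun x => (x,y))) := ⟨_, rfl⟩
  obtain ⟨S, hS⟩ : ∃ S : Finset (ℕ×ℕ), S = box ∪ T := ⟨_, rfl⟩
  have pick : ∀ n : ℕ, ∃ p : ℕ × ℕ, g p.1 p.2 = 2*n := by
    intro n
    obtain ⟨x, y, h⟩ := hsurj n
    exact ⟨(x,y), h⟩
  have hlow : N + 1 ≤ S.card := by
    have hc1 : (range (N+1)).card = N + 1 := Finset.card_range _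
    rw [← hc1]
    apply Finset.card_le_card_of_injOn (fun n => (pick n).choose)
    · intro n hn
      have hmem := (pick n).choose_spec
      simp only [Finset.mem_coe, Finset.mem_range] at hn
      rcases hkey _ _ n hmem (by omega) with ⟨h1, h2⟩ | ⟨h1, h2, h3⟩
      · rw [hS]
        apply Finset.mem_union_left
        rw [hbox]
        simp only [Finset.mem_product, Finset.mem_range]
        omega
      · rw [hS]
        apply Finset.mem_union_right
        rw [hT]
        simp only [Finset.mem_biUnion]
        refine ⟨(pick n).choose.2, by simp only [Finset.mem_range]; omega, ?_⟩
        rw [Finset.mem_image]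
        refine ⟨(pick n).choose.1, ?_, rfl⟩
        simp only [Finset.mem_range]
        have hle := row_bound M (pick n).choose.1 (pick n).choose.2 h3
        simp only [hw, ht]
        omega
    · intro n hn n' hn' heq
      have heq' : (pick n).choose = (pick n').choose := heq
      have h1 := (pick n).choose_spec
      have h2 := (pick n').choose_spec
      rw [heq'] at h1
      omega
  have hTcard : T.card ≤ ∑ y ∈ range (s0+1), w y := by
    rw [hT]
    refine le_trans Finset.card_biUnion_le ?_
    apply Finset.sum_le_sum
    intro y _
    exact le_trans Finset.card_image_le (by simp)
  have hsum1 : ∑ y ∈ range (s0+1), w y ≤ ∑ y ∈ range (8*B), w y :=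
    Finset.sum_le_sum_of_subset (Finset.range_subset_range.mpr (by omega))
  have hVle : ∀ j : ℕ, 800 * V j ≤ (s0+8) * m j := by
    intro j
    simp only [hV]
    omega
  have hV1 : ∀ j : ℕ, (s0+8)*(m j) < 800*(V j + 1) := by
    intro j
    have h := Nat.div_add_mod ((s0+8)*(m j)) 800
    have h2 := Nat.mod_lt ((s0+8)*(m j)) (show 0 < 800 by norm_num)
    simp only [hV]
    omega
  have hVb : ∀ j, j < 8 → Nat.sqrt (M + 3*(j*B)^2) ≤ V j + 1 := by
    intro j hj
    have hmj : 10000*(64+3*j^2) ≤ (m j)^2 := by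
      interval_cases j <;> norm_num [hm]
    exact block_sqrt_bound M s0 B (V j) (m j) j hs0 hB8 (hV1 j) hmj
  have hnotr : ∀ j, j < 8 → 2*(j*B) ≤ V j + 2 := by
    intro j hj
    have hm200 : 200*j ≤ m j := by interval_cases j <;> norm_num [hm]
    have h1 : 1600*(j*B) ≤ 200*j*(s0+8) := by
      calc 1600*(j*B) = 200*j*(8*B) := by ring
        _ ≤ 200*j*(s0+8) := Nat.mul_le_mul_left _ hB8
    have h2 : 200*j*(s0+8) ≤ (m j)*(s0+8) := Nat.mul_le_mul_right _ hm200
    have h3 := hV1 j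
    have h4 : (s0+8)*(m j) = (m j)*(s0+8) := by ring
    linarith only [h1, h2, h3, h4]
  have hwb : ∀ j, j < 8 → ∀ δ, w (j*B+δ) ≤ u j := by
    intro j hj δ
    have h1 := sqrt_step M (j*B) δ
    have h2 := hVb j hj
    have h3 := hnotr j hj
    simp only [hw, hu, ht]
    omega
  have hsum2 : ∑ j ∈ range 8, ∑ δ ∈ range B, w (j*B+δ) ≤ ∑ j ∈ range 8, B * u j := by
    apply Finset.sum_le_sum
    intro j hj
    calc ∑ δ ∈ range B, w (j*B+δ) ≤ ∑ δ ∈ range B, u j :=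
          Finset.sum_le_sum (fun δ _ => hwb j (Finset.mem_range.mp hj) δ)
      _ = B * u j := by rw [Finset.sum_const, Finset.card_range, smul_eq_mul]
  have hboxcard : box.card = (10*D+1)*(10*D+1) := by
    rw [hbox, Finset.card_product, Finset.card_range]
  have hfinal : N + 1 ≤ (10*D+1)*(10*D+1) + ∑ j ∈ range 8, B * u j := by
    have hSc : S.card ≤ (10*D+1)*(10*D+1) + ∑ j ∈ range 8, B * u j := by
      calc S.card ≤ box.card + T.card := hS ▸ Finset.card_union_le _ _
        _ ≤ (10*D+1)*(10*D+1) + ∑ j ∈ range 8, B * u j := by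
            rw [hboxcard]
            have hh := le_trans hTcard (le_trans hsum1 (le_of_eq (sum_block w B 8)))
            exact Nat.add_le_add_left (le_trans hh hsum2) _
    exact le_trans hlow hSc
  have huZ : ∀ j, j < 8 → ((u j : ℤ)) = (V j : ℤ) + 2 - 2*(j:ℤ)*(B:ℤ) := by
    intro j hj
    have h1 := hnotr j hj
    have h2 : u j + 2*(j*B) = V j + 2 := by
      have h1' := hnotr j hj
      simp only [hu]
      omega
    have h3 := congrArg (fun k : ℕ => (k:ℤ)) h2
    push_cast at h3
    linarith only [h3]
  have hfinZ : (N:ℤ) + 1 ≤ (10*(D:ℤ)+1)*(10*(D:ℤ)+1) + ∑ j ∈ range 8, (B:ℤ) * (u j : ℤ) := by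
    exact_mod_cast hfinal
  rw [Finset.sum_range_succ, Finset.sum_range_succ, Finset.sum_range_succ,
    Finset.sum_range_succ, Finset.sum_range_succ, Finset.sum_range_succ,
    Finset.sum_range_succ, Finset.sum_range_one] at hfinZ
  rw [huZ 0 (by norm_num), huZ 1 (by norm_num), huZ 2 (by norm_num), huZ 3 (by norm_num),
    huZ 4 (by norm_num), huZ 5 (by norm_num), huZ 6 (by norm_num), huZ 7 (by norm_num)] at hfinZ
  push_cast at hfinZ
  have hmval : m 0 = 800 ∧ m 1 = 819 ∧ m 2 = 872 ∧ m 3 = 954 ∧ m 4 = 1059 ∧ m 5 = 1179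
      ∧ m 6 = 1312 ∧ m 7 = 1453 := by
    refine ⟨?_, ?_, ?_, ?_, ?_, ?_, ?_, ?_⟩ <;> norm_num [hm]
  obtain ⟨hm0, hm1, hm2, hm3, hm4, hm5, hm6, hm7⟩ := hmval
  have hBV : ∀ j : ℕ, 800*((B:ℤ)*(V j:ℤ)) ≤ (m j : ℤ)*((B:ℤ)*((s0:ℤ)+8)) := by
    intro j
    have h1 : B*(800 * V j) ≤ B*((s0+8) * m j) := Nat.mul_le_mul_left _ (hVle j)
    have h3 : (B:ℤ)*(800*(V j:ℤ)) ≤ (B:ℤ)*(((s0:ℤ)+8) * (m j:ℤ)) := by exact_mod_cast h1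
    linarith only [h3]
  have hBV0 := hBV 0; have hBV1 := hBV 1; have hBV2 := hBV 2; have hBV3 := hBV 3
  have hBV4 := hBV 4; have hBV5 := hBV 5; have hBV6 := hBV 6; have hBV7 := hBV 7
  rw [hm0] at hBV0; rw [hm1] at hBV1; rw [hm2] at hBV2; rw [hm3] at hBV3
  rw [hm4] at hBV4; rw [hm5] at hBV5; rw [hm6] at hBV6; rw [hm7] at hBV7
  push_cast at hBV0 hBV1 hBV2 hBV3 hBV4 hBV5 hBV6 hBV7
  have hp0 : 8*(B:ℤ) ≤ (s0:ℤ) + 8 := by exact_mod_cast hB8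
  have hp1 : 8*((B:ℤ)*((s0:ℤ)+8)) ≤ ((s0:ℤ)+8)*((s0:ℤ)+8) := by
    have h1 : (8*B)*(s0+8) ≤ (s0+8)*(s0+8) := Nat.mul_le_mul_right _ hB8
    have h2 : ((8*B)*(s0+8) : ℤ) ≤ (((s0+8)*(s0+8) : ℕ) : ℤ) := by exact_mod_cast h1
    push_cast at h2
    linarith only [h2]
  have hp2 : ((s0:ℤ)+1)*((s0:ℤ)+1) ≤ 64*((B:ℤ)*(B:ℤ)) := by
    have h1 : (s0+1)*(s0+1) ≤ (8*B)*(8*B) := Nat.mul_le_mul hB8' hB8'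
    have h2 : (((s0+1)*(s0+1) : ℕ) : ℤ) ≤ (((8*B)*(8*B) : ℕ) : ℤ) := by exact_mod_cast h1
    push_cast at h2
    linarith only [h2]
  have hp3 : (s0:ℤ)*(s0:ℤ) ≤ (M:ℤ) := by
    have h1 : s0*s0 ≤ M := by rw [hs0]; exact Nat.sqrt_le M
    exact_mod_cast h1
  have hp4 : 9*(M:ℤ) ≤ 20*(N:ℤ) + 9 := by exact_mod_cast h9M.1
  have hp5 : (N:ℤ) = 100000000*((D:ℤ)+1)*((D:ℤ)+1) := by
    rw [hN]; push_cast; ring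
  have hp6 : (s0:ℤ) ≤ 17400*((D:ℤ)+1) := by exact_mod_cast hs0D
  have hp7 : (0:ℤ) ≤ (D:ℤ) := Int.ofNat_nonneg D
  have hp8 : (0:ℤ) ≤ (B:ℤ) := Int.ofNat_nonneg B
  have hp9 : (0:ℤ) ≤ (D:ℤ)*(D:ℤ) := mul_nonneg hp7 hp7
  linarith only [hfinZ, hBV0, hBV1, hBV2, hBV3, hBV4, hBV5, hBV6, hBV7, hp0, hp1, hp2, hp3,
    hp4, hp5, hp6, hp7, hp8, hp9]

theorem packing_quadratic_b_le_one
    (a c f : ℕ) (b d e : ℤ) (hquad : ¬ (a = 0 ∧ b = 0 ∧ c = 0))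
    (had : (a : ℤ) % 2 = d % 2) (hce : (c : ℤ) % 2 = e % 2)
    (F : ℕ × ℕ → ℚ)
    (hF : ∀ p : ℕ × ℕ, F p =
      ((a : ℚ) * p.1 ^ 2 + 2 * (b : ℚ) * p.1 * p.2 + (c : ℚ) * p.2 ^ 2) / 2
        + ((d : ℚ) * p.1 + (e : ℚ) * p.2) / 2 + (f : ℚ))
    (hmaps : ∀ p : ℕ × ℕ, ∃ n : ℕ, F p = n)
    (hbij : ∀ n : ℕ, ∃! p : ℕ × ℕ, F p = n) :
    b ≤ 1 := by
  by_contra hb1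
  push_neg at hb1
  have hb2 : 2 ≤ b := hb1
  set g : ℕ → ℕ → ℤ := fun x y =>
    (a:ℤ)*x^2 + 2*b*x*y + (c:ℤ)*y^2 + d*x + e*y + 2*f with hgdef
  have hgF : ∀ x y : ℕ, ((g x y : ℤ) : ℚ) = 2 * F (x, y) := by
    intro x y
    rw [hF (x, y)]
    simp only [hgdef]
    push_cast
    ring
  have hval : ∀ x y : ℕ, ∃ n : ℕ, g x y = 2*n := by
    intro x y
    obtain ⟨n, hn⟩ := hmaps (x, y)
    refine ⟨n, ?_⟩
    have := hgF x y
    rw [hn] at this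
    exact_mod_cast this
  have hinj : ∀ x y x' y' : ℕ, g x y = g x' y' → x = x' ∧ y = y' := by
    intro x y x' y' hgg
    obtain ⟨n, hn⟩ := hmaps (x, y)
    have hn' : F (x', y') = n := by
      have h1 := hgF x y
      have h2 := hgF x' y'
      rw [hgg] at h1
      rw [h1] at h2
      rw [hn] at h2
      have h3 : F (x', y') = F (x, y) := by linarith
      rw [h3, hn]
    obtain ⟨p, hp, hu⟩ := hbij n
    have e1 := hu (x, y) hn
    have e2 := hu (x', y') hn'
    have e3 : ((x, y) : ℕ × ℕ) = (x', y') := e1.trans e2.symm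
    exact ⟨congrArg Prod.fst e3, congrArg Prod.snd e3⟩
  have hsurj : ∀ n : ℕ, ∃ x y : ℕ, g x y = 2*n := by
    intro n
    obtain ⟨p, hp, -⟩ := hbij n
    refine ⟨p.1, p.2, ?_⟩
    have := hgF p.1 p.2
    rw [show ((p.1 : ℕ), (p.2 : ℕ)) = p from rfl, hp] at this
    exact_mod_cast this
  rcases Nat.eq_zero_or_pos a with ha | ha
  · -- a = 0 : rows are linear
    refine lin_case b d c e f hb2 g (fun x y => ?_) hval hinj
    simp only [hgdef, ha]
    push_cast
    ring
  rcases Nat.eq_zero_or_pos c with hc | hc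
  · -- c = 0 : columns are linear
    refine lin_case b e a d f hb2 (fun x y => g y x) (fun x y => ?_) (fun x y => hval y x)
      (fun x y x' y' h => ?_)
    · simp only [hgdef, hc]
      push_cast
      ring
    · obtain ⟨h1, h2⟩ := hinj y x y' x' h
      exact ⟨h2, h1⟩
  exact main_case a c f b d e ha hc hb2 g (fun x y => rfl) hval hinj hsurj
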